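/- With the setup of the previous context, if W̃(y,x) − W̃(x,y) = V(x) − V(y) for all x, y ∈ E, then for every probability measure μ on E and every bounded measurable f one has μ(L̃_μ(f)) = μ(V·f) − μ(f)·μ(V). -/

import Mathlib

open MeasureTheory

lemma myAbsMul {a b A B : ℝ} (ha : |a| ≤ A) (hb : |b| ≤ B) : |a * b| ≤ A * B := by
  rw [abs_mul]
  exact mul_le_mul ha hb (abs_nonneg _) (le_trans (abs_nonneg _) ha)

lemma myIntegrable {E : Type*} [MeasurableSpace E] (μ : Measure E) [IsFiniteMeasure μ]
    (g : E → ℝ) (hg : Measurable g) (C : ℝ) (hC : ∀ x, |g x| ≤ C) : Integrable g μ :=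
  ⟨hg.aestronglyMeasurable, HasFiniteIntegral.of_bounded (C := C)
    (Filter.Eventually.of_forall fun x => by simpa using hC x)⟩

lemma myIntegrableProd {E : Type*} [MeasurableSpace E] (μ : Measure E) [IsFiniteMeasure μ]
    (g : E × E → ℝ) (hg : Measurable g) (C : ℝ) (hC : ∀ p, |g p| ≤ C) :
    Integrable g (μ.prod μ) :=
  ⟨hg.aestronglyMeasurable, HasFiniteIntegral.of_bounded (C := C)
    (Filter.Eventually.of_forall fun x => by simpa using hC x)⟩

theorem stmt1 {E : Type*} [MeasurableSpace E]
    (V : E → ℝ) (hVmeas : Measurable V) (hVbd : ∃ C, ∀ x, |V x| ≤ C)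
    (W : E → E → ℝ) (hWmeas : Measurable (Function.uncurry W))
    (hWpos : ∀ x y, 0 ≤ W x y) (hWbd : ∃ C, ∀ x y, W x y ≤ C)
    (hW : ∀ x y, W y x - W x y = V x - V y) :
    ∀ (μ : Measure E), IsProbabilityMeasure μ →
      ∀ f : E → ℝ, Measurable f → (∃ C, ∀ x, |f x| ≤ C) →
        ∫ x, (∫ y, W x y * (f y - f x) ∂μ) ∂μ
          = ∫ x, V x * f x ∂μ - (∫ x, f x ∂μ) * (∫ x, V x ∂μ) := by
  intro μ hμ f hf hfbd
  obtain ⟨Cf, hCf⟩ := hfbd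
  obtain ⟨CW, hCW⟩ := hWbd
  obtain ⟨CV, hCV⟩ := hVbd
  have habsW : ∀ x y, |W x y| ≤ CW := fun x y => by
    rw [abs_of_nonneg (hWpos x y)]; exact hCW x y
  have hWm1 : ∀ x, Measurable (fun y => W x y) := fun x =>
    hWmeas.comp (measurable_prodMk_left)
  have hWm2 : ∀ y, Measurable (fun x => W x y) := fun y =>
    hWmeas.comp (measurable_prodMk_right)
  have hI1 : ∀ x, Integrable (fun y => W x y * f y) μ := fun x =>
    myIntegrable μ _ ((hWm1 x).mul hf) (CW * Cf) fun y => myAbsMul (habsW x y) (hCf y)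
  have hI2 : ∀ x, Integrable (fun y => W x y * f x) μ := fun x =>
    myIntegrable μ _ ((hWm1 x).mul measurable_const) (CW * Cf) fun y =>
      myAbsMul (habsW x y) (hCf x)
  have hProd : Integrable (fun p : E × E => W p.1 p.2 * f p.2) (μ.prod μ) :=
    myIntegrableProd μ _ (hWmeas.mul (hf.comp measurable_snd)) (CW * Cf) fun p =>
      myAbsMul (habsW _ _) (hCf _)
  have hswap : ∫ x, (∫ y, W x y * f y ∂μ) ∂μ = ∫ x, (∫ y, W y x * f x ∂μ) ∂μ :=
    integral_integral_swap hProd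
  have hsplit : ∀ x, (∫ y, W x y * (f y - f x) ∂μ)
      = (∫ y, W x y * f y ∂μ) - (∫ y, W x y * f x ∂μ) := by
    intro x
    rw [← integral_sub (hI1 x) (hI2 x)]
    congr 1; ext y; ring
  simp only [hsplit]
  have hprodA : Integrable (fun p : E × E => W p.2 p.1 * f p.1) (μ.prod μ) :=
    myIntegrableProd μ _ ((hWmeas.comp measurable_swap).mul (hf.comp measurable_fst))
      (CW * Cf) fun p => myAbsMul (habsW _ _) (hCf _)
  have hprodB : Integrable (fun p : E × E => W p.1 p.2 * f p.1) (μ.prod μ) :=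
    myIntegrableProd μ _ (hWmeas.mul (hf.comp measurable_fst)) (CW * Cf) fun p =>
      myAbsMul (habsW _ _) (hCf _)
  have hIA : Integrable (fun x => ∫ y, W y x * f x ∂μ) μ := hprodA.integral_prod_left
  have hIB : Integrable (fun x => ∫ y, W x y * f x ∂μ) μ := hprodB.integral_prod_left
  have hI1' : Integrable (fun x => ∫ y, W x y * f y ∂μ) μ := hProd.integral_prod_left
  rw [integral_sub hI1' hIB, hswap, ← integral_sub hIA hIB]
  have hinner : ∀ x, (∫ y, W y x * f x ∂μ) - (∫ y, W x y * f x ∂μ)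
      = V x * f x - f x * (∫ y, V y ∂μ) := by
    intro x
    rw [← integral_sub (myIntegrable μ (fun y => W y x * f x) ((hWm2 x).mul measurable_const) (CW * Cf)
        fun y => myAbsMul (habsW _ _) (hCf _)) (hI2 x)]
    have h1 : (fun y => W y x * f x - W x y * f x) = fun y => V x * f x - f x * V y := by
      ext y
      linear_combination (f x) * hW x y
    rw [h1, integral_sub (integrable_const _)
      ((myIntegrable μ V hVmeas CV hCV).const_mul (f x)),
      integral_const, probReal_univ, one_smul, integral_const_mul]
  simp only [hinner]
  rw [integral_sub (myIntegrable μ (fun x => V x * f x) (hVmeas.mul hf) (CV * Cf) fun x =>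
      myAbsMul (hCV x) (hCf x)) ((myIntegrable μ f hf Cf hCf).mul_const _),
    integral_mul_const]
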